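/- Fix k ≥ 1 and let A be the 3^k × 3^k matrix indexed by vectors x ∈ {0,1,2}^k, with A_{x,y} = 1 if x and y differ in exactly one coordinate and in that coordinate differ by exactly 1, and A_{x,y} = 0 otherwise (the adjacency matrix of the k-fold Cartesian power of the path P₃). Then |(exp(−i (π/√2) A))_{b,a}| = 1, where a = (0,…,0) and b = (2,…,2); moreover, the graph distance from a to b is 2k. Thus the P₃ hypercube achieves perfect state transfer over even distance D = 2k at time π/√2, using 3^{D/2} vertices. -/

import Mathlib

open Matrix Finset

/-- The `k`-fold Cartesian power of the path `P₃`, on vertex set `{0,1,2}^k`: two vertices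
are adjacent iff they differ in exactly one coordinate, and in that coordinate differ by
exactly `1`. -/
def pathPower (k : ℕ) : SimpleGraph (Fin k → Fin 3) where
  Adj x y := (Finset.univ.filter fun i => x i ≠ y i).card = 1 ∧
    ∀ i, x i ≠ y i → ((x i : ℤ) - (y i : ℤ)).natAbs = 1
  symm := by
    constructor
    intro x y h
    refine ⟨by simpa [ne_comm] using h.1, fun i hi => ?_⟩
    have := h.2 i hi.symm
    omega
  loopless := by
    constructor
    intro x h
    simp at h

instance (k : ℕ) : DecidableRel (pathPower k).Adj :=
  fun _ _ => inferInstanceAs (Decidable (_ ∧ _))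

namespace PathPowerPST

open NormedSpace Nat

attribute [local instance] Matrix.linftyOpNormedAddCommGroup Matrix.linftyOpNormedRing
  Matrix.linftyOpNormedAlgebra

/-- If `v` is an eigenvector of `N` with eigenvalue `μ`, then it is an eigenvector of
`exp N` with eigenvalue `e^μ`. -/
lemma exp_mulVec_eig {V : Type*} [Fintype V] [DecidableEq V] (N : Matrix V V ℂ)
    (v : V → ℂ) (μ : ℂ) (h : N *ᵥ v = μ • v) :
    exp N *ᵥ v = Complex.exp μ • v := by
  have hpow : ∀ n : ℕ, N ^ n *ᵥ v = μ ^ n • v := by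
    intro n
    induction n with
    | zero => simp
    | succ n ih =>
      rw [pow_succ, ← Matrix.mulVec_mulVec, h, Matrix.mulVec_smul, ih, smul_smul, pow_succ,
        mul_comm]
  let L : Matrix V V ℂ →ₗ[ℂ] (V → ℂ) :=
    { toFun := fun X => X *ᵥ v
      map_add' := fun X Y => Matrix.add_mulVec X Y v
      map_smul' := fun c X => Matrix.smul_mulVec c X v }
  let L' := LinearMap.toContinuousLinearMap L
  have hs : Summable (fun n : ℕ => (n !⁻¹ : ℂ) • N ^ n) := expSeries_summable' N
  have hc : ∀ X : Matrix V V ℂ, L' X = X *ᵥ v := fun X =>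
    DFunLike.congr_fun (LinearMap.coe_toContinuousLinearMap L) X
  rw [← hc, exp_eq_tsum (𝕂 := ℂ), L'.map_tsum hs]
  have h1 : ∀ n : ℕ, L' ((n !⁻¹ : ℂ) • N ^ n) = ((n !⁻¹ : ℂ) * μ ^ n) • v := by
    intro n
    rw [hc, Matrix.smul_mulVec, hpow, smul_smul]
  rw [tsum_congr h1]
  have h2 : Summable (fun n : ℕ => (n !⁻¹ : ℂ) * μ ^ n) := by
    have := expSeries_summable' (𝕂 := ℂ) μ
    simpa [smul_eq_mul] using this
  rw [h2.tsum_smul_const, Complex.exp_eq_exp_ℂ, exp_eq_tsum (𝕂 := ℂ)]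
  norm_num [smul_eq_mul]

/-! ### The `3 × 3` spectral data for `P₃` -/

noncomputable def w3 (χ x : Fin 3) : ℂ :=
  if χ = 0 then (if x = 0 then 1 else if x = 1 then 0 else -1)
  else (if x = 1 then (if χ = 1 then ((Real.sqrt 2 : ℝ) : ℂ) else -((Real.sqrt 2 : ℝ) : ℂ)) else 1)

noncomputable def mu3 (c : Fin 3) : ℂ :=
  if c = 0 then 0 else if c = 1 then ((Real.sqrt 2 : ℝ) : ℂ) else -((Real.sqrt 2 : ℝ) : ℂ)

noncomputable def d3 (c : Fin 3) : ℂ := if c = 0 then 1/2 else 1/4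

def a3 (x y : Fin 3) : ℂ := if ((x : ℤ) - y).natAbs = 1 then 1 else 0

lemma sqrt2_sq : ((Real.sqrt 2 : ℝ) : ℂ) ^ 2 = 2 := by
  rw [← Complex.ofReal_pow, Real.sq_sqrt (by norm_num)]
  norm_num

lemma eig3 (χ x : Fin 3) : ∑ c, a3 x c * w3 χ c = mu3 χ * w3 χ x := by
  fin_cases χ <;> fin_cases x <;>
    simp [a3, w3, mu3, Fin.sum_univ_three] <;>
    linear_combination -sqrt2_sq

lemma dw3 (s : Fin 3) : ∑ c, d3 c * w3 c s = (if s = 0 then 1 else 0) := by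
  fin_cases s <;> simp [d3, w3, Fin.sum_univ_three] <;> ring

lemma phase (c : Fin 3) :
    Complex.exp (-Complex.I * ((Real.pi : ℂ) / ((Real.sqrt 2 : ℝ) : ℂ)) * mu3 c) =
      (if c = 0 then 1 else -1) := by
  have h2 : ((Real.sqrt 2 : ℝ) : ℂ) ≠ 0 := by
    simp [Real.sqrt_eq_zero']
  have key2 : ((Real.pi : ℂ) / ((Real.sqrt 2 : ℝ) : ℂ)) * ((Real.sqrt 2 : ℝ) : ℂ) =
      (Real.pi : ℂ) := by
    field_simp
  have e1 : Complex.I * ((Real.pi : ℂ) / ((Real.sqrt 2 : ℝ) : ℂ)) * ((Real.sqrt 2 : ℝ) : ℂ) =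
      (Real.pi : ℂ) * Complex.I := by
    rw [mul_assoc, key2, mul_comm]
  fin_cases c <;> simp [mu3]
  · rw [e1, Complex.exp_neg, Complex.exp_pi_mul_I]
    norm_num
  · rw [e1]
    exact Complex.exp_pi_mul_I

lemma dEw3 (c : Fin 3) :
    d3 c * Complex.exp (-Complex.I * ((Real.pi : ℂ) / ((Real.sqrt 2 : ℝ) : ℂ)) * mu3 c) * w3 c 2 =
      -(1/2) * (if c = 0 then 1 else 1/2) := by
  rw [phase]
  fin_cases c <;> simp [d3, w3] <;> ring

lemma dEw3_sum :
    ∑ c, d3 c * Complex.exp (-Complex.I * ((Real.pi : ℂ) / ((Real.sqrt 2 : ℝ) : ℂ)) * mu3 c) *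
      w3 c 2 = -1 := by
  rw [Fin.sum_univ_three, dEw3, dEw3, dEw3]
  norm_num [show (1 : Fin 3) ≠ 0 from by decide, show (2 : Fin 3) ≠ 0 from by decide]

/-! ### The adjacency matrix as a Kronecker sum, and its eigenvectors -/

lemma adj_entry {k : ℕ} (x y : Fin k → Fin 3) :
    (pathPower k).adjMatrix ℂ x y =
      ∑ i, ∏ j, (if j = i then a3 (x j) (y j) else if x j = y j then 1 else 0) := by
  classical
  rw [SimpleGraph.adjMatrix_apply]
  by_cases h : (pathPower k).Adj x y
  · obtain ⟨i₀, hi₀⟩ := Finset.card_eq_one.mp h.1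
    have hmem : x i₀ ≠ y i₀ := by
      have : i₀ ∈ Finset.univ.filter fun j => x j ≠ y j := hi₀ ▸ Finset.mem_singleton_self i₀
      simpa using this
    have heq : ∀ j, j ≠ i₀ → x j = y j := by
      intro j hj
      by_contra hne
      have : j ∈ Finset.univ.filter fun j => x j ≠ y j := by simp [hne]
      rw [hi₀, Finset.mem_singleton] at this
      exact hj this
    rw [if_pos h, Finset.sum_eq_single i₀]
    · refine (Finset.prod_eq_one ?_).symm
      intro j _
      by_cases hji : j = i₀
      · subst hji
        simp [a3, h.2 j hmem]
      · simp [hji, heq j hji]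
    · intro i _ hne
      refine Finset.prod_eq_zero (Finset.mem_univ i₀) ?_
      rw [if_neg (Ne.symm hne), if_neg hmem]
    · intro hnot
      exact absurd (Finset.mem_univ i₀) hnot
  · rw [if_neg h]
    symm
    apply Finset.sum_eq_zero
    intro i _
    by_cases hcard : (Finset.univ.filter fun j => x j ≠ y j).card = 1
    · obtain ⟨i₀, hi₀⟩ := Finset.card_eq_one.mp hcard
      have hmem : x i₀ ≠ y i₀ := by
        have : i₀ ∈ Finset.univ.filter fun j => x j ≠ y j := hi₀ ▸ Finset.mem_singleton_self i₀
        simpa using this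
      have hna : ¬ (((x i₀ : ℤ) - (y i₀ : ℤ)).natAbs = 1) := by
        intro hna
        refine h ⟨hcard, fun j hj => ?_⟩
        have : j ∈ Finset.univ.filter fun j => x j ≠ y j := by simp [hj]
        rw [hi₀, Finset.mem_singleton] at this
        subst this
        exact hna
      refine Finset.prod_eq_zero (Finset.mem_univ i₀) ?_
      by_cases hii : i₀ = i
      · rw [if_pos hii, a3, if_neg hna]
      · rw [if_neg hii, if_neg hmem]
    · rcases Nat.lt_or_ge (Finset.univ.filter fun j => x j ≠ y j).card 1 with hc | hc
      · have hxy : ∀ j, x j = y j := by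
          intro j
          by_contra hne
          have : j ∈ Finset.univ.filter fun j => x j ≠ y j := by simp [hne]
          have := Finset.card_pos.mpr ⟨j, this⟩
          omega
        refine Finset.prod_eq_zero (Finset.mem_univ i) ?_
        rw [if_pos rfl, a3, hxy i, if_neg (by omega)]
      · have h2 : 1 < (Finset.univ.filter fun j => x j ≠ y j).card :=
          lt_of_le_of_ne hc (Ne.symm hcard)
        obtain ⟨j, hjD, hji⟩ := Finset.exists_mem_ne h2 i
        refine Finset.prod_eq_zero (Finset.mem_univ j) ?_
        have hxj : x j ≠ y j := by simpa using hjD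
        rw [if_neg hji, if_neg hxj]

lemma eigvec {k : ℕ} (χ : Fin k → Fin 3) :
    (pathPower k).adjMatrix ℂ *ᵥ (fun x => ∏ i, w3 (χ i) (x i)) =
      (∑ i, mu3 (χ i)) • (fun x => ∏ i, w3 (χ i) (x i)) := by
  classical
  funext x
  show ∑ y, (pathPower k).adjMatrix ℂ x y * ∏ j, w3 (χ j) (y j) = _
  calc ∑ y, (pathPower k).adjMatrix ℂ x y * ∏ j, w3 (χ j) (y j)
      = ∑ y : Fin k → Fin 3, ∑ i, ∏ j,
          ((if j = i then a3 (x j) (y j) else if x j = y j then 1 else 0) * w3 (χ j) (y j)) := by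
        refine Finset.sum_congr rfl fun y _ => ?_
        rw [adj_entry, Finset.sum_mul]
        exact Finset.sum_congr rfl fun i _ => by rw [Finset.prod_mul_distrib]
    _ = ∑ i, ∑ y : Fin k → Fin 3, ∏ j,
          ((if j = i then a3 (x j) (y j) else if x j = y j then 1 else 0) * w3 (χ j) (y j)) :=
        Finset.sum_comm
    _ = ∑ i, ∏ j, ∑ c,
          ((if j = i then a3 (x j) c else if x j = c then 1 else 0) * w3 (χ j) c) := by
        refine Finset.sum_congr rfl fun i _ => ?_
        rw [Finset.prod_univ_sum]
        rw [Fintype.piFinset_univ]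
    _ = ∑ i, ∏ j, (if j = i then mu3 (χ j) * w3 (χ j) (x j) else w3 (χ j) (x j)) := by
        refine Finset.sum_congr rfl fun i _ => Finset.prod_congr rfl fun j _ => ?_
        by_cases hji : j = i
        · simp only [if_pos hji]
          exact eig3 (χ j) (x j)
        · simp only [if_neg hji]
          simp [Finset.sum_ite_eq (Finset.univ) (x j)]
    _ = ∑ i, mu3 (χ i) * ∏ j, w3 (χ j) (x j) := by
        refine Finset.sum_congr rfl fun i _ => ?_
        calc ∏ j, (if j = i then mu3 (χ j) * w3 (χ j) (x j) else w3 (χ j) (x j))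
            = ∏ j, ((if j = i then mu3 (χ i) else 1) * w3 (χ j) (x j)) := by
              refine Finset.prod_congr rfl fun j _ => ?_
              by_cases hji : j = i
              · subst hji; simp
              · simp [hji]
          _ = (∏ j, (if j = i then mu3 (χ i) else 1)) * ∏ j, w3 (χ j) (x j) :=
              Finset.prod_mul_distrib
          _ = mu3 (χ i) * ∏ j, w3 (χ j) (x j) := by
              rw [Finset.prod_ite_eq' Finset.univ i (fun _ => mu3 (χ i))]
              simp
    _ = (∑ i, mu3 (χ i)) * ∏ j, w3 (χ j) (x j) := (Finset.sum_mul _ _ _).symm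
    _ = ((∑ i, mu3 (χ i)) • fun x => ∏ i, w3 (χ i) (x i)) x := rfl

-- potential
def Phi {k : ℕ} (x : Fin k → Fin 3) : ℤ := ∑ i, (x i : ℤ)

lemma Phi_adj {k : ℕ} {x y : Fin k → Fin 3} (h : (pathPower k).Adj x y) :
    (Phi x - Phi y).natAbs = 1 := by
  obtain ⟨i₀, hi₀⟩ := Finset.card_eq_one.mp h.1
  have hmem : x i₀ ≠ y i₀ := by
    have : i₀ ∈ Finset.univ.filter fun j => x j ≠ y j := hi₀ ▸ Finset.mem_singleton_self i₀
    simpa using this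
  have heq : ∀ j, j ≠ i₀ → x j = y j := by
    intro j hj
    by_contra hne
    have : j ∈ Finset.univ.filter fun j => x j ≠ y j := by simp [hne]
    rw [hi₀, Finset.mem_singleton] at this
    exact hj this
  have : Phi x - Phi y = (x i₀ : ℤ) - (y i₀ : ℤ) := by
    unfold Phi
    rw [← Finset.sum_sub_distrib]
    rw [Finset.sum_eq_single i₀]
    · intro j _ hj
      rw [heq j hj]
      ring
    · intro hnot
      exact absurd (Finset.mem_univ i₀) hnot
  rw [this]
  exact h.2 i₀ hmem

lemma walk_len_lower {k : ℕ} {x y : Fin k → Fin 3} (p : (pathPower k).Walk x y) :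
    (Phi y - Phi x).natAbs ≤ p.length := by
  induction p with
  | nil => simp
  | cons h p ih =>
    have h1 := Phi_adj h
    rw [SimpleGraph.Walk.length_cons]
    omega

lemma adj_of {k : ℕ} {x y : Fin k → Fin 3} (i₀ : Fin k) (hne : x i₀ ≠ y i₀)
    (heq : ∀ j, j ≠ i₀ → x j = y j) (h1 : ((x i₀ : ℤ) - (y i₀ : ℤ)).natAbs = 1) :
    (pathPower k).Adj x y := by
  have hfilter : (Finset.univ.filter fun j => x j ≠ y j) = {i₀} := by
    ext j
    simp only [Finset.mem_filter, Finset.mem_univ, true_and, Finset.mem_singleton]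
    constructor
    · intro hj
      by_contra hj2
      exact hj (heq j hj2)
    · intro hj
      subst hj
      exact hne
  constructor
  · rw [hfilter]
    exact Finset.card_singleton _
  · intro j hj
    have : j = i₀ := by
      by_contra hj2
      exact hj (heq j hj2)
    subst this
    exact h1

-- upper bound walk
def zv (k m : ℕ) : Fin k → Fin 3 := fun i => if (i : ℕ) < m then 2 else 0
def yv (k m : ℕ) : Fin k → Fin 3 := fun i => if (i : ℕ) < m then 2 else if (i : ℕ) = m then 1 else 0

lemma adj_zy {k m : ℕ} (hm : m < k) : (pathPower k).Adj (zv k m) (yv k m) := by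
  refine adj_of ⟨m, hm⟩ ?_ ?_ ?_
  · simp [zv, yv]
  · intro j hj
    have hjm : (j : ℕ) ≠ m := fun h => hj (Fin.ext h)
    simp only [zv, yv]
    by_cases h : (j : ℕ) < m
    · rw [if_pos h, if_pos h]
    · rw [if_neg h, if_neg h, if_neg hjm]
  · simp [zv, yv]

lemma adj_yz {k m : ℕ} (hm : m < k) : (pathPower k).Adj (yv k m) (zv k (m+1)) := by
  refine adj_of ⟨m, hm⟩ ?_ ?_ ?_
  · simp [zv, yv]
  · intro j hj
    have hjm : (j : ℕ) ≠ m := fun h => hj (Fin.ext h)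
    simp only [zv, yv]
    by_cases h : (j : ℕ) < m
    · rw [if_pos h, if_pos (by omega : (j:ℕ) < m + 1)]
    · rw [if_neg h, if_neg hjm, if_neg (by omega : ¬ (j:ℕ) < m + 1)]
  · simp [zv, yv]

lemma exists_walk (k : ℕ) : ∀ m, m ≤ k → ∃ p : (pathPower k).Walk (zv k 0) (zv k m), p.length = 2 * m := by
  intro m
  induction m with
  | zero => intro _; exact ⟨SimpleGraph.Walk.nil, rfl⟩
  | succ m ih =>
    intro hm
    obtain ⟨p, hp⟩ := ih (by omega)
    refine ⟨p.append ((adj_zy (by omega : m < k)).toWalk.append (adj_yz (by omega)).toWalk), ?_⟩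
    simp [SimpleGraph.Walk.length_append, hp]
    omega

lemma dist_eq (k : ℕ) :
    (pathPower k).dist (fun _ => (0 : Fin 3)) (fun _ => (2 : Fin 3)) = 2 * k := by
  have hz0 : zv k 0 = (fun _ => (0 : Fin 3)) := by funext i; simp [zv]
  have hzk : zv k k = (fun _ => (2 : Fin 3)) := by funext i; simp [zv, i.isLt]
  obtain ⟨p, hp⟩ := exists_walk k k le_rfl
  rw [← hz0, ← hzk]
  apply le_antisymm
  · exact hp ▸ SimpleGraph.dist_le p
  · have hr : (pathPower k).Reachable (zv k 0) (zv k k) := ⟨p⟩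
    obtain ⟨q, hq⟩ := hr.exists_walk_length_eq_dist
    have hlow := walk_len_lower q
    have h0 : Phi (zv k 0) = 0 := by
      unfold Phi zv
      simp
    have h2 : Phi (zv k k) = 2 * k := by
      unfold Phi zv
      rw [Finset.sum_congr rfl (fun i _ => by rw [if_pos i.isLt])]
      simp [mul_comm]
    rw [← hq]
    omega

lemma delta_expand {k : ℕ} :
    (Pi.single (fun _ => (0:Fin 3)) (1:ℂ) : ((Fin k → Fin 3) → ℂ)) =
      ∑ χ : Fin k → Fin 3, (∏ i, d3 (χ i)) • (fun x => ∏ i, w3 (χ i) (x i)) := by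
  classical
  funext x
  rw [Finset.sum_apply]
  have h1 : ∀ χ : Fin k → Fin 3,
      ((∏ i, d3 (χ i)) • fun x => ∏ i, w3 (χ i) (x i)) x = ∏ i, (d3 (χ i) * w3 (χ i) (x i)) := by
    intro χ
    simp [Finset.prod_mul_distrib]
  rw [Finset.sum_congr rfl fun χ _ => h1 χ]
  have h2 : ∑ χ : Fin k → Fin 3, ∏ i, (d3 (χ i) * w3 (χ i) (x i)) =
      ∏ i, ∑ c, d3 c * w3 c (x i) := by
    rw [Finset.prod_univ_sum]
    rw [Fintype.piFinset_univ]
  rw [h2, Finset.prod_congr rfl fun i _ => dw3 (x i), Pi.single_apply]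
  by_cases hx : x = (fun _ => (0 : Fin 3))
  · subst hx
    simp
  · rw [if_neg hx]
    symm
    obtain ⟨i, hi⟩ : ∃ i, x i ≠ 0 := by
      by_contra hc
      push_neg at hc
      exact hx (funext hc)
    refine Finset.prod_eq_zero (Finset.mem_univ i) ?_
    rw [if_neg hi]

lemma entry (k : ℕ) :
    NormedSpace.exp
        ((-Complex.I * (Real.pi / Real.sqrt 2)) • (pathPower k).adjMatrix ℂ)
        (fun _ => (2 : Fin 3)) (fun _ => (0 : Fin 3)) = (-1 : ℂ) ^ k := by
  classical
  set τ : ℂ := -Complex.I * (Real.pi / Real.sqrt 2) with hτ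
  set N : Matrix (Fin k → Fin 3) (Fin k → Fin 3) ℂ := τ • (pathPower k).adjMatrix ℂ with hN
  set a : Fin k → Fin 3 := fun _ => 0
  set b : Fin k → Fin 3 := fun _ => 2
  have hNv : ∀ χ : Fin k → Fin 3,
      N *ᵥ (fun x => ∏ i, w3 (χ i) (x i)) = (τ * ∑ i, mu3 (χ i)) • (fun x => ∏ i, w3 (χ i) (x i)) := by
    intro χ
    rw [hN, Matrix.smul_mulVec, eigvec, smul_smul]
  have hexp : ∀ χ : Fin k → Fin 3,
      NormedSpace.exp N *ᵥ (fun x => ∏ i, w3 (χ i) (x i)) =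
        Complex.exp (τ * ∑ i, mu3 (χ i)) • (fun x => ∏ i, w3 (χ i) (x i)) :=
    fun χ => exp_mulVec_eig N _ _ (hNv χ)
  have hb : NormedSpace.exp N b a =
      (NormedSpace.exp N *ᵥ Pi.single a (1:ℂ)) b := by
    rw [Matrix.mulVec_single]
    simp
  rw [hb, delta_expand]
  have hlin : NormedSpace.exp N *ᵥ
      (∑ χ : Fin k → Fin 3, (∏ i, d3 (χ i)) • (fun x => ∏ i, w3 (χ i) (x i))) =
      ∑ χ : Fin k → Fin 3, (∏ i, d3 (χ i)) •
        (Complex.exp (τ * ∑ i, mu3 (χ i)) • (fun x => ∏ i, w3 (χ i) (x i))) := by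
    rw [← Matrix.mulVecLin_apply, map_sum]
    exact Finset.sum_congr rfl fun χ _ => by
      rw [_root_.map_smul, Matrix.mulVecLin_apply, hexp χ]
  rw [hlin, Finset.sum_apply]
  have hterm : ∀ χ : Fin k → Fin 3,
      ((∏ i, d3 (χ i)) • (Complex.exp (τ * ∑ i, mu3 (χ i)) • fun x => ∏ i, w3 (χ i) (x i))) b =
        ∏ i, (d3 (χ i) * Complex.exp (τ * mu3 (χ i)) * w3 (χ i) 2) := by
    intro χ
    have hE : Complex.exp (τ * ∑ i, mu3 (χ i)) = ∏ i, Complex.exp (τ * mu3 (χ i)) := by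
      rw [Finset.mul_sum, Complex.exp_sum]
    simp only [Pi.smul_apply, smul_eq_mul, hE]
    have : b = fun _ => (2 : Fin 3) := rfl
    rw [this]
    rw [← Finset.prod_mul_distrib, ← Finset.prod_mul_distrib]
    exact Finset.prod_congr rfl fun i _ => by ring
  rw [Finset.sum_congr rfl fun χ _ => hterm χ]
  have hswap : ∑ χ : Fin k → Fin 3, ∏ i, (d3 (χ i) * Complex.exp (τ * mu3 (χ i)) * w3 (χ i) 2) =
      ∏ _i : Fin k, ∑ c, (d3 c * Complex.exp (τ * mu3 c) * w3 c 2) := by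
    rw [Finset.prod_univ_sum]
    rw [Fintype.piFinset_univ]
  rw [hswap]
  have hsum : ∑ c, (d3 c * Complex.exp (τ * mu3 c) * w3 c 2) = -1 := by
    rw [hτ]
    exact dEw3_sum
  rw [Finset.prod_congr rfl fun i _ => hsum]
  simp

end PathPowerPST

open PathPowerPST in
/-- **`P₃` hypercube perfect state transfer.** The `k`-fold Cartesian power of `P₃`
achieves perfect state transfer at time `π/√2` from `a = (0,…,0)` to `b = (2,…,2)`, which
lies at graph distance `2k`; it uses `3^k = 3^{D/2}` vertices for the distance `D = 2k`. -/
theorem pathPower_pst (k : ℕ) (hk : 1 ≤ k) :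
    ‖(NormedSpace.exp
        ((-Complex.I * (Real.pi / Real.sqrt 2)) • (pathPower k).adjMatrix ℂ)
        (fun _ => (2 : Fin 3)) (fun _ => (0 : Fin 3)))‖ = 1 ∧
    (pathPower k).dist (fun _ => (0 : Fin 3)) (fun _ => (2 : Fin 3)) = 2 * k := by
  constructor
  · rw [entry k]
    simp
  · exact dist_eq k
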